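/- Let d ≥ 1, let E ⊆ ℝ^d be a finite set with at least two points, and let P_E be a 1-field on E. Then Γ̃(P_E) ≤ Γ'(P_E) ≤ 2·Γ̃(P_E). -/

import Mathlib

open scoped RealInnerProductSpace

/-- auxiliary: the pair-value sets are finite -/
lemma pairSet_finite {α : Type*} (E : Set α) (hE : E.Finite) (F : α → α → ℝ) :
    {t : ℝ | ∃ x ∈ E, ∃ y ∈ E, x ≠ y ∧ t = F x y}.Finite := by
  apply Set.Finite.subset ((hE.prod hE).image (fun p => F p.1 p.2))
  rintro t ⟨x, hx, y, hy, _, rfl⟩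
  exact ⟨(x, y), ⟨hx, hy⟩, rfl⟩
/-- The affine polynomial (first order jet) `P_u(z) = f(u) + ⟪g(u), z - u⟫`. -/
noncomputable def jet {d : ℕ} (f : EuclideanSpace ℝ (Fin d) → ℝ)
    (g : EuclideanSpace ℝ (Fin d) → EuclideanSpace ℝ (Fin d))
    (u z : EuclideanSpace ℝ (Fin d)) : ℝ :=
  f u + ⟪g u, z - u⟫

/-- `A(x,y) = |P_x(x) - P_y(x) + P_x(y) - P_y(y)| / |x - y|²`. -/
noncomputable def funA {d : ℕ} (f : EuclideanSpace ℝ (Fin d) → ℝ)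
    (g : EuclideanSpace ℝ (Fin d) → EuclideanSpace ℝ (Fin d))
    (x y : EuclideanSpace ℝ (Fin d)) : ℝ :=
  |jet f g x x - jet f g y x + jet f g x y - jet f g y y| / ‖x - y‖ ^ 2

/-- `B(x,y) = ‖g(x) - g(y)‖ / |x - y|`. -/
noncomputable def funB {d : ℕ}
    (g : EuclideanSpace ℝ (Fin d) → EuclideanSpace ℝ (Fin d))
    (x y : EuclideanSpace ℝ (Fin d)) : ℝ :=
  ‖g x - g y‖ / ‖x - y‖

/-- `Ã(x,y) = |P_x(x) - P_y(x)| / |x - y|²`. -/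
noncomputable def funAtilde {d : ℕ} (f : EuclideanSpace ℝ (Fin d) → ℝ)
    (g : EuclideanSpace ℝ (Fin d) → EuclideanSpace ℝ (Fin d))
    (x y : EuclideanSpace ℝ (Fin d)) : ℝ :=
  |jet f g x x - jet f g y x| / ‖x - y‖ ^ 2

/-- `Γ(P_E)`: max over distinct pairs of `√(A² + B²) + A`. -/
noncomputable def Gamma {d : ℕ} (E : Set (EuclideanSpace ℝ (Fin d)))
    (f : EuclideanSpace ℝ (Fin d) → ℝ)
    (g : EuclideanSpace ℝ (Fin d) → EuclideanSpace ℝ (Fin d)) : ℝ :=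
  sSup {t : ℝ | ∃ x ∈ E, ∃ y ∈ E, x ≠ y ∧
    t = Real.sqrt (funA f g x y ^ 2 + funB g x y ^ 2) + funA f g x y}

/-- `Γ'(P_E)`: max over distinct pairs of `max {A, B}`. -/
noncomputable def GammaPrime {d : ℕ} (E : Set (EuclideanSpace ℝ (Fin d)))
    (f : EuclideanSpace ℝ (Fin d) → ℝ)
    (g : EuclideanSpace ℝ (Fin d) → EuclideanSpace ℝ (Fin d)) : ℝ :=
  sSup {t : ℝ | ∃ x ∈ E, ∃ y ∈ E, x ≠ y ∧ t = max (funA f g x y) (funB g x y)}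

/-- `Γ̃(P_E)`: max over distinct pairs of `max {Ã, B}`. -/
noncomputable def GammaTilde {d : ℕ} (E : Set (EuclideanSpace ℝ (Fin d)))
    (f : EuclideanSpace ℝ (Fin d) → ℝ)
    (g : EuclideanSpace ℝ (Fin d) → EuclideanSpace ℝ (Fin d)) : ℝ :=
  sSup {t : ℝ | ∃ x ∈ E, ∃ y ∈ E, x ≠ y ∧ t = max (funAtilde f g x y) (funB g x y)}

/-- `Γ̃(P_E) ≤ Γ'(P_E) ≤ 2·Γ̃(P_E)`. -/
theorem statement6 {d : ℕ} (hd : 1 ≤ d) (E : Set (EuclideanSpace ℝ (Fin d)))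
    (hE : E.Finite) (h2 : ∃ x ∈ E, ∃ y ∈ E, x ≠ y)
    (f : EuclideanSpace ℝ (Fin d) → ℝ)
    (g : EuclideanSpace ℝ (Fin d) → EuclideanSpace ℝ (Fin d)) :
    GammaTilde E f g ≤ GammaPrime E f g ∧
      GammaPrime E f g ≤ 2 * GammaTilde E f g := by
  obtain ⟨x0, hx0, y0, hy0, hxy0⟩ := h2
  set Sp := {t : ℝ | ∃ x ∈ E, ∃ y ∈ E, x ≠ y ∧ t = max (funA f g x y) (funB g x y)} with hSp
  set St := {t : ℝ | ∃ x ∈ E, ∃ y ∈ E, x ≠ y ∧ t = max (funAtilde f g x y) (funB g x y)} with hSt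
  have hSpb : BddAbove Sp := (pairSet_finite E hE _).bddAbove
  have hStb : BddAbove St := (pairSet_finite E hE _).bddAbove
  have hSpne : Sp.Nonempty := ⟨_, x0, hx0, y0, hy0, hxy0, rfl⟩
  have hStne : St.Nonempty := ⟨_, x0, hx0, y0, hy0, hxy0, rfl⟩
  -- key pointwise lemmas
  have key1 : ∀ x y : EuclideanSpace ℝ (Fin d), x ≠ y →
      funAtilde f g x y ≤ (funA f g x y + funB g x y) / 2 := by
    intro x y hxy
    have hr : 0 < ‖x - y‖ := norm_pos_iff.mpr (sub_ne_zero.mpr hxy)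
    have hid : 2 * (jet f g x x - jet f g y x)
        = (jet f g x x - jet f g y x + jet f g x y - jet f g y y)
          + ⟪g x - g y, x - y⟫ := by
      simp [jet, inner_sub_left, inner_sub_right]; ring
    have hcs : |⟪g x - g y, x - y⟫| ≤ ‖g x - g y‖ * ‖x - y‖ :=
      abs_real_inner_le_norm _ _
    have hnum : 2 * |jet f g x x - jet f g y x|
        ≤ |jet f g x x - jet f g y x + jet f g x y - jet f g y y|
          + ‖g x - g y‖ * ‖x - y‖ := by
      calc 2 * |jet f g x x - jet f g y x| = |2 * (jet f g x x - jet f g y x)| := by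
            rw [abs_mul]; simp
        _ = |(jet f g x x - jet f g y x + jet f g x y - jet f g y y)
              + ⟪g x - g y, x - y⟫| := by rw [hid]
        _ ≤ _ := le_trans (abs_add_le _ _) (by linarith)
    rw [funAtilde, funA, funB]
    calc |jet f g x x - jet f g y x| / ‖x - y‖ ^ 2
        = (2 * |jet f g x x - jet f g y x|) / (2 * ‖x - y‖ ^ 2) := by ring
      _ ≤ (|jet f g x x - jet f g y x + jet f g x y - jet f g y y|
            + ‖g x - g y‖ * ‖x - y‖) / (2 * ‖x - y‖ ^ 2) := by
          gcongr
      _ = (|jet f g x x - jet f g y x + jet f g x y - jet f g y y| / ‖x - y‖ ^ 2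
            + ‖g x - g y‖ / ‖x - y‖) / 2 := by
          field_simp
  have key2 : ∀ x y : EuclideanSpace ℝ (Fin d), x ≠ y →
      funA f g x y ≤ funAtilde f g x y + funAtilde f g y x := by
    intro x y hxy
    have hr : 0 < ‖x - y‖ := norm_pos_iff.mpr (sub_ne_zero.mpr hxy)
    have hnum : |jet f g x x - jet f g y x + jet f g x y - jet f g y y|
        ≤ |jet f g x x - jet f g y x| + |jet f g y y - jet f g x y| := by
      have : jet f g x x - jet f g y x + jet f g x y - jet f g y y
          = (jet f g x x - jet f g y x) - (jet f g y y - jet f g x y) := by ring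
      rw [this]; exact abs_sub _ _
    rw [funA, funAtilde, funAtilde, norm_sub_rev y x]
    rw [← add_div]
    exact div_le_div_of_nonneg_right hnum (by positivity) |>.trans_eq rfl
  have hBnn : ∀ x y : EuclideanSpace ℝ (Fin d), 0 ≤ funB g x y := fun x y =>
    div_nonneg (norm_nonneg _) (norm_nonneg _)
  -- memberships give bounds by the sups
  have hmemT : ∀ x ∈ E, ∀ y ∈ E, x ≠ y →
      max (funAtilde f g x y) (funB g x y) ≤ GammaTilde E f g := by
    intro x hx y hy hxy
    exact le_csSup hStb ⟨x, hx, y, hy, hxy, rfl⟩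
  have hGT0 : 0 ≤ GammaTilde E f g :=
    le_trans (le_trans (hBnn x0 y0) (le_max_right _ _)) (hmemT x0 hx0 y0 hy0 hxy0)
  constructor
  · apply csSup_le hStne
    rintro t ⟨x, hx, y, hy, hxy, rfl⟩
    have h1 : funAtilde f g x y ≤ max (funA f g x y) (funB g x y) := by
      have := key1 x y hxy
      have hA := le_max_left (funA f g x y) (funB g x y)
      have hB := le_max_right (funA f g x y) (funB g x y)
      linarith
    have h2 : max (funAtilde f g x y) (funB g x y)
        ≤ max (funA f g x y) (funB g x y) :=
      max_le h1 (le_max_right _ _)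
    exact h2.trans (le_csSup hSpb ⟨x, hx, y, hy, hxy, rfl⟩)
  · apply csSup_le hSpne
    rintro t ⟨x, hx, y, hy, hxy, rfl⟩
    have hA : funA f g x y ≤ 2 * GammaTilde E f g := by
      have h1 : funAtilde f g x y ≤ GammaTilde E f g :=
        le_trans (le_max_left _ _) (hmemT x hx y hy hxy)
      have h2 : funAtilde f g y x ≤ GammaTilde E f g :=
        le_trans (le_max_left _ _) (hmemT y hy x hx hxy.symm)
      have := key2 x y hxy
      linarith
    have hB : funB g x y ≤ 2 * GammaTilde E f g := by
      have h1 : funB g x y ≤ GammaTilde E f g :=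
        le_trans (le_max_right _ _) (hmemT x hx y hy hxy)
      linarith
    exact max_le hA hB
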